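/- arXiv:1203.5587 — 6 statements merged into one kernel-verified Lean document; each statement's English description precedes it below -/
import Mathlib

section
/- (Kuhn–Tucker sufficiency.) Let n ≥ 1, let B be a symmetric positive semidefinite n×n real matrix, b₁ ∈ ℝⁿ, β₀ ∈ ℝ, let ŷ(x) = β₀ + b₁ᵀx + xᵀBx, and let c > 0 with 𝔛 = {x ∈ ℝⁿ : ‖x‖² ≤ c²}. Suppose x* ∈ ℝⁿ and λ ∈ ℝ satisfy the Kuhn–Tucker first-order conditions: b₁ + 2(B + λI)x* = 0, ‖x*‖² − c² ≤ 0, λ(‖x*‖² − c²) = 0, and λ ≥ 0. Then x* is a global minimum of ŷ over 𝔛, i.e. ŷ(x*) ≤ ŷ(x) for all x ∈ 𝔛. -/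
open scoped RealInnerProductSpace
open Matrix

private lemma inner_mulVec_symm' {n : ℕ} (M : Matrix (Fin n) (Fin n) ℝ) (hM : M.IsSymm)
    (u v : EuclideanSpace ℝ (Fin n)) :
    ⟪u, (WithLp.toLp 2 (M.mulVec v) : EuclideanSpace ℝ (Fin n))⟫ = ⟪v, (WithLp.toLp 2 (M.mulVec u) : EuclideanSpace ℝ (Fin n))⟫ := by
  simp only [PiLp.inner_apply, RCLike.inner_apply, conj_trivial]
  have : (u : Fin n → ℝ) ⬝ᵥ M.mulVec v = (v : Fin n → ℝ) ⬝ᵥ M.mulVec u := by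
    rw [Matrix.dotProduct_mulVec, ← Matrix.mulVec_transpose, hM.eq, dotProduct_comm]
  simpa [dotProduct, mul_comm, PiLp.toLp_apply] using this

/-- Kuhn–Tucker sufficiency: if `(x*, λ)` satisfies the Kuhn–Tucker first-order
conditions for the program `min ŷ(x)` subject to `‖x‖² ≤ c²`, with `B` symmetric positive
semidefinite, then `x*` is a global minimum of `ŷ` over `𝔛`. -/
theorem kuhnTucker_sufficiency (n : ℕ) (hn : 1 ≤ n)
    (B : Matrix (Fin n) (Fin n) ℝ) (hB : B.IsSymm)
    (hBpsd : ∀ x : EuclideanSpace ℝ (Fin n),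
      0 ≤ ⟪x, (WithLp.toLp 2 (B.mulVec x) : EuclideanSpace ℝ (Fin n))⟫)
    (b₁ : EuclideanSpace ℝ (Fin n)) (β₀ : ℝ) (c : ℝ) (hc : 0 < c)
    (xstar : EuclideanSpace ℝ (Fin n)) (lam : ℝ)
    (hkt1 : b₁ + (2 : ℝ) • (WithLp.equiv 2 (Fin n → ℝ)).symm
        ((B + lam • (1 : Matrix (Fin n) (Fin n) ℝ)).mulVec xstar) = 0)
    (hkt2 : ‖xstar‖ ^ 2 - c ^ 2 ≤ 0)
    (hkt3 : lam * (‖xstar‖ ^ 2 - c ^ 2) = 0)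
    (hkt4 : 0 ≤ lam) :
    ∀ x ∈ {x : EuclideanSpace ℝ (Fin n) | ‖x‖ ^ 2 ≤ c ^ 2},
      β₀ + ⟪b₁, xstar⟫ + ⟪xstar, (WithLp.toLp 2 (B.mulVec xstar) : EuclideanSpace ℝ (Fin n))⟫ ≤
      β₀ + ⟪b₁, x⟫ + ⟪x, (WithLp.toLp 2 (B.mulVec x) : EuclideanSpace ℝ (Fin n))⟫ := by
  intro x hx
  simp only [Set.mem_setOf_eq] at hx
  set M : Matrix (Fin n) (Fin n) ℝ := B + lam • (1 : Matrix (Fin n) (Fin n) ℝ) with hMdef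
  have hM : M.IsSymm := by
    simp [Matrix.IsSymm, hMdef, Matrix.transpose_add, hB.eq, Matrix.transpose_smul]
  -- expansion of inner with M
  have hexp : ∀ u v : EuclideanSpace ℝ (Fin n),
      ⟪u, (WithLp.toLp 2 (M.mulVec v) : EuclideanSpace ℝ (Fin n))⟫
        = ⟪u, (WithLp.toLp 2 (B.mulVec v) : EuclideanSpace ℝ (Fin n))⟫ + lam * ⟪u, v⟫ := by
    intro u v
    simp only [PiLp.inner_apply, RCLike.inner_apply, conj_trivial, hMdef, Matrix.add_mulVec,
      Matrix.smul_mulVec, PiLp.toLp_apply, Matrix.one_mulVec, Pi.add_apply, Pi.smul_apply, smul_eq_mul,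
      Finset.mul_sum]
    rw [← Finset.sum_add_distrib]
    congr 1; ext i; ring
  -- psd of M
  have hMpsd : ∀ u : EuclideanSpace ℝ (Fin n), 0 ≤ ⟪u, (WithLp.toLp 2 (M.mulVec u) : EuclideanSpace ℝ (Fin n))⟫ := by
    intro u
    rw [hexp, real_inner_self_eq_norm_sq]
    have := hBpsd u
    positivity
  -- b₁ = -2 M x*
  have hb : ∀ u : EuclideanSpace ℝ (Fin n),
      ⟪b₁, u⟫ = -2 * ⟪u, (WithLp.toLp 2 (M.mulVec xstar) : EuclideanSpace ℝ (Fin n))⟫ := by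
    intro u
    have h1 : b₁ = -((2 : ℝ) • (WithLp.toLp 2 (M.mulVec xstar) : EuclideanSpace ℝ (Fin n))) := by
      have := hkt1
      rw [add_eq_zero_iff_eq_neg] at this
      exact this
    rw [h1, inner_neg_left, inner_smul_left, real_inner_comm]
    simp only [starRingEnd_apply, star_trivial]
    ring
  -- key inequality from psd at x - x*
  have hsub : (WithLp.toLp 2 (M.mulVec (WithLp.ofLp (x - xstar))) : EuclideanSpace ℝ (Fin n))
      = (WithLp.toLp 2 (M.mulVec x) : EuclideanSpace ℝ (Fin n)) - (WithLp.toLp 2 (M.mulVec xstar) : EuclideanSpace ℝ (Fin n)) :=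
    by rw [WithLp.ofLp_sub, Matrix.mulVec_sub, WithLp.toLp_sub]
  have key : 0 ≤ ⟪x, (WithLp.toLp 2 (M.mulVec x) : EuclideanSpace ℝ (Fin n))⟫
      - 2 * ⟪x, (WithLp.toLp 2 (M.mulVec xstar) : EuclideanSpace ℝ (Fin n))⟫
      + ⟪xstar, (WithLp.toLp 2 (M.mulVec xstar) : EuclideanSpace ℝ (Fin n))⟫ := by
    have h0 := hMpsd (x - xstar)
    rw [hsub, inner_sub_left, inner_sub_right, inner_sub_right,
      inner_mulVec_symm' M hM xstar x] at h0
    linarith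
  -- translate to B
  have e1 := hexp x x
  have e2 := hexp xstar xstar
  have e3 := hexp x xstar
  have hbx := hb x
  have hbxs := hb xstar
  have hxx : ⟪x, x⟫ = ‖x‖ ^ 2 := real_inner_self_eq_norm_sq x
  have hxsxs : ⟪xstar, xstar⟫ = ‖xstar‖ ^ 2 := real_inner_self_eq_norm_sq xstar
  have hsymvx := inner_mulVec_symm' M hM x xstar
  nlinarith [mul_le_mul_of_nonneg_left hx hkt4]
end

section
/- (Kuhn–Tucker necessity.) Let n ≥ 1, let B be a symmetric positive semidefinite n×n real matrix, b₁ ∈ ℝⁿ, β₀ ∈ ℝ, let ŷ(x) = β₀ + b₁ᵀx + xᵀBx, and let c > 0 with 𝔛 = {x ∈ ℝⁿ : ‖x‖² ≤ c²}. If x* ∈ 𝔛 satisfies ŷ(x*) ≤ ŷ(x) for all x ∈ 𝔛, then there exists a Lagrange multiplier λ ≥ 0 such that b₁ + 2(B + λI)x* = 0 and λ(‖x*‖² − c²) = 0. -/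
open scoped RealInnerProductSpace
open Matrix

set_option maxHeartbeats 1000000

private lemma aux_le (a K ε : ℝ) (hε : 0 < ε) (h : ∀ t, 0 < t → t ≤ ε → a ≤ t * K) : a ≤ 0 := by
  by_contra hA
  push_neg at hA
  rcases le_or_gt K 0 with hK | hK
  · have := h ε hε le_rfl; nlinarith
  · have ht : 0 < min ε (a / (2 * K)) := lt_min hε (by positivity)
    have h1 := h _ ht (min_le_left _ _)
    have h2 : min ε (a / (2 * K)) ≤ a / (2 * K) := min_le_right _ _
    have h3 : min ε (a / (2 * K)) * K ≤ (a / (2 * K)) * K :=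
      mul_le_mul_of_nonneg_right h2 hK.le
    have h4 : a / (2 * K) * K = a / 2 := by field_simp
    rw [h4] at h3
    linarith

/-- Kuhn–Tucker necessity: if `x*` is a global minimum of `ŷ` over
`𝔛 = {x : ‖x‖² ≤ c²}`, with `B` symmetric positive semidefinite, then there is a Lagrange
multiplier `λ ≥ 0` with `b₁ + 2(B + λI)x* = 0` and `λ(‖x*‖² − c²) = 0`. -/
theorem kuhnTucker_necessity (n : ℕ) (hn : 1 ≤ n)
    (B : Matrix (Fin n) (Fin n) ℝ) (hB : B.IsSymm)
    (hBpsd : ∀ x : EuclideanSpace ℝ (Fin n),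
      0 ≤ ⟪x, (WithLp.toLp 2 (B.mulVec x) : EuclideanSpace ℝ (Fin n))⟫)
    (b₁ : EuclideanSpace ℝ (Fin n)) (β₀ : ℝ) (c : ℝ) (hc : 0 < c)
    (xstar : EuclideanSpace ℝ (Fin n))
    (hxstar : ‖xstar‖ ^ 2 ≤ c ^ 2)
    (hmin : ∀ x ∈ {x : EuclideanSpace ℝ (Fin n) | ‖x‖ ^ 2 ≤ c ^ 2},
      β₀ + ⟪b₁, xstar⟫ + ⟪xstar, (WithLp.toLp 2 (B.mulVec xstar) : EuclideanSpace ℝ (Fin n))⟫ ≤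
      β₀ + ⟪b₁, x⟫ + ⟪x, (WithLp.toLp 2 (B.mulVec x) : EuclideanSpace ℝ (Fin n))⟫) :
    ∃ lam : ℝ, 0 ≤ lam ∧
      b₁ + (2 : ℝ) • (WithLp.equiv 2 (Fin n → ℝ)).symm
          ((B + lam • (1 : Matrix (Fin n) (Fin n) ℝ)).mulVec xstar) = 0 ∧
      lam * (‖xstar‖ ^ 2 - c ^ 2) = 0 := by
  set T : EuclideanSpace ℝ (Fin n) → EuclideanSpace ℝ (Fin n) :=
    fun x => (WithLp.equiv 2 (Fin n → ℝ)).symm (B.mulVec x) with hT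
  have hTval : ∀ x : EuclideanSpace ℝ (Fin n),
      T x = (WithLp.toLp 2 (B.mulVec x) : EuclideanSpace ℝ (Fin n)) := fun _ => rfl
  have hTadd : ∀ x y : EuclideanSpace ℝ (Fin n), T (x + y) = T x + T y := by
    intro x y
    ext i
    simp [hT, Matrix.mulVec, dotProduct, WithLp.equiv_symm_apply, PiLp.toLp_apply, PiLp.add_apply,
      mul_add, Finset.sum_add_distrib]
  have hTsmul : ∀ (t : ℝ) (x : EuclideanSpace ℝ (Fin n)), T (t • x) = t • T x := by
    intro t x
    ext i
    simp [hT, Matrix.mulVec, dotProduct, WithLp.equiv_symm_apply, PiLp.toLp_apply, PiLp.smul_apply,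
      smul_eq_mul, Finset.mul_sum, mul_comm, mul_left_comm]
  have hTsymm : ∀ x y : EuclideanSpace ℝ (Fin n), ⟪x, T y⟫ = ⟪T x, y⟫ := by
    intro x y
    simp only [hT, PiLp.inner_apply, RCLike.inner_apply, starRingEnd_apply, star_trivial,
      WithLp.equiv_symm_apply, PiLp.toLp_apply]
    have : (fun i => x i * B.mulVec y i) = fun i => x i * B.mulVec y i := rfl
    calc (∑ i, B.mulVec y i * x i) = x ⬝ᵥ B.mulVec y := by
          simp only [dotProduct]; exact Finset.sum_congr rfl fun i _ => mul_comm _ _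
      _ = B.vecMul x ⬝ᵥ y := dotProduct_mulVec x B y
      _ = B.mulVec x ⬝ᵥ y := by rw [← Matrix.mulVec_transpose, hB.eq]
      _ = ∑ i, y i * B.mulVec x i := by
          simp only [dotProduct]; exact Finset.sum_congr rfl fun i _ => mul_comm _ _
  set g : EuclideanSpace ℝ (Fin n) := b₁ + (2:ℝ) • T xstar with hg
  have hpsd : ∀ x : EuclideanSpace ℝ (Fin n), 0 ≤ ⟪x, T x⟫ := hBpsd
  -- key inequality
  have hkey : ∀ h : EuclideanSpace ℝ (Fin n), ‖xstar + h‖ ^ 2 ≤ c ^ 2 →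
      0 ≤ ⟪g, h⟫ + ⟪h, T h⟫ := by
    intro h hfeas
    have := hmin (xstar + h) hfeas
    rw [show (WithLp.toLp 2 (B.mulVec (WithLp.ofLp (xstar + h))) : EuclideanSpace ℝ (Fin n)) = T (xstar + h) from rfl,
      show (WithLp.toLp 2 (B.mulVec xstar) : EuclideanSpace ℝ (Fin n)) = T xstar from rfl] at this
    rw [hTadd] at this
    simp only [inner_add_left, inner_add_right] at this
    have hsw : ⟪xstar, T h⟫ = ⟪h, T xstar⟫ := by
      rw [hTsymm, real_inner_comm]
    have hsw2 : ⟪T xstar, h⟫ = ⟪h, T xstar⟫ := real_inner_comm _ _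
    rw [hg]
    simp only [inner_add_left, real_inner_smul_left]
    linarith
  -- directional inequality for small positive multiples
  have hdir : ∀ (v : EuclideanSpace ℝ (Fin n)) (ε : ℝ), 0 < ε →
      (∀ t : ℝ, 0 < t → t ≤ ε → ‖xstar + t • v‖ ^ 2 ≤ c ^ 2) → 0 ≤ ⟪g, v⟫ := by
    intro v ε hε hfeas
    have h1 : ∀ t : ℝ, 0 < t → t ≤ ε → -⟪g, v⟫ ≤ t * ⟪v, T v⟫ := by
      intro t ht htε
      have h2 := hkey (t • v) (hfeas t ht htε)
      rw [real_inner_smul_right, hTsmul, real_inner_smul_left, real_inner_smul_right] at h2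
      have h3 : t * (-⟪g, v⟫) ≤ t * (t * ⟪v, T v⟫) := by nlinarith
      exact le_of_mul_le_mul_left h3 ht
    have := aux_le (-⟪g, v⟫) ⟪v, T v⟫ ε hε h1
    linarith
  by_cases hb : ‖xstar‖ ^ 2 = c ^ 2
  · -- boundary case
    have hxc : ‖xstar‖ = c := by
      nlinarith [norm_nonneg xstar]
    have hdir2 : ∀ v : EuclideanSpace ℝ (Fin n), ⟪xstar, v⟫ < 0 → 0 ≤ ⟪g, v⟫ := by
      intro v hv
      refine hdir v ((-2 * ⟪xstar, v⟫) / (‖v‖ ^ 2 + 1))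
        (div_pos (by linarith) (by positivity)) ?_
      intro t ht htε
      have hnv : (0:ℝ) ≤ ‖v‖ ^ 2 := by positivity
      have hexp : ‖xstar + t • v‖ ^ 2 = ‖xstar‖ ^ 2 + 2 * (t * ⟪xstar, v⟫) + t ^ 2 * ‖v‖ ^ 2 := by
        rw [norm_add_sq_real, real_inner_smul_right, norm_smul]
        rw [Real.norm_eq_abs, abs_of_pos ht]
        ring
      rw [hexp, hb]
      have h5 : t * (‖v‖ ^ 2 + 1) ≤ -2 * ⟪xstar, v⟫ :=
        (le_div_iff₀ (by positivity : (0:ℝ) < ‖v‖ ^ 2 + 1)).mp htε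
      have h6 : t * (t * ‖v‖ ^ 2) ≤ t * (-2 * ⟪xstar, v⟫) :=
        mul_le_mul_of_nonneg_left (by nlinarith) ht.le
      nlinarith
    have hdir3 : ∀ v : EuclideanSpace ℝ (Fin n), ⟪xstar, v⟫ ≤ 0 → 0 ≤ ⟪g, v⟫ := by
      intro v hv
      have h1 : ∀ s : ℝ, 0 < s → s ≤ 1 → -⟪g, v⟫ ≤ s * (-⟪g, xstar⟫) := by
        intro s hs _
        have hvs : ⟪xstar, v - s • xstar⟫ < 0 := by
          rw [inner_sub_right, real_inner_smul_right, real_inner_self_eq_norm_sq, hb]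
          nlinarith [mul_pos hs (pow_pos hc 2)]
        have := hdir2 _ hvs
        rw [inner_sub_right, real_inner_smul_right] at this
        linarith
      have := aux_le _ _ 1 one_pos h1
      linarith
    -- g = μ • xstar with μ ≤ 0
    set μ : ℝ := ⟪xstar, g⟫ / c ^ 2 with hμ
    have hw : g = μ • xstar := by
      have hvperp : ⟪xstar, g - μ • xstar⟫ = 0 := by
        rw [inner_sub_right, real_inner_smul_right, real_inner_self_eq_norm_sq, hb, hμ]
        field_simp
        ring
      have h1 := hdir3 (-(g - μ • xstar)) (by rw [inner_neg_right, hvperp]; simp)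
      rw [inner_neg_right] at h1
      have h2 : ⟪g, g - μ • xstar⟫ = ‖g - μ • xstar‖ ^ 2 + μ * ⟪xstar, g - μ • xstar⟫ := by
        have : g = (g - μ • xstar) + μ • xstar := by abel
        nth_rewrite 1 [this]
        rw [inner_add_left, real_inner_smul_left, real_inner_self_eq_norm_sq]
      rw [h2, hvperp] at h1
      have : ‖g - μ • xstar‖ = 0 := by nlinarith [norm_nonneg (g - μ • xstar)]
      have := norm_eq_zero.mp this
      have h4 : g - μ • xstar = 0 := this
      linear_combination (norm := module) h4
    have hμle : μ ≤ 0 := by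
      have h1 := hdir3 (-xstar) (by rw [inner_neg_right, real_inner_self_eq_norm_sq, hb]; nlinarith)
      rw [inner_neg_right] at h1
      have h2 : ⟪g, xstar⟫ = μ * c ^ 2 := by
        rw [hw, real_inner_smul_left, real_inner_self_eq_norm_sq, hb]
      rw [real_inner_comm] at h1
      rw [hμ]
      exact div_nonpos_iff.mpr (Or.inr ⟨by linarith, by positivity⟩)
    refine ⟨-μ / 2, by linarith, ?_, by rw [hb]; ring⟩
    have hmv : (WithLp.equiv 2 (Fin n → ℝ)).symm ((B + (-μ / 2) • (1 : Matrix (Fin n) (Fin n) ℝ)).mulVec xstar)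
        = T xstar + (-μ / 2) • xstar := by
      ext i
      simp [hT, Matrix.add_mulVec, Matrix.smul_mulVec, Matrix.one_mulVec,
        WithLp.equiv_symm_apply, PiLp.toLp_apply]
    rw [hmv]
    have : b₁ + (2:ℝ) • (T xstar + (-μ / 2) • xstar) = g + (-μ) • xstar := by
      rw [hg]; module
    rw [this, hw]
    module
  · -- interior case
    have hlt : ‖xstar‖ < c := by
      have : ‖xstar‖ ^ 2 < c ^ 2 := lt_of_le_of_ne hxstar hb
      nlinarith [norm_nonneg xstar]
    have hg0 : g = 0 := by
      have h1 : ∀ t : ℝ, 0 < t → t ≤ (c - ‖xstar‖) / (‖g‖ + 1) →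
          ‖xstar + t • (-g)‖ ^ 2 ≤ c ^ 2 := by
        intro t ht htε
        have hb1 : ‖xstar + t • (-g)‖ ≤ ‖xstar‖ + t * ‖g‖ := by
          calc ‖xstar + t • (-g)‖ ≤ ‖xstar‖ + ‖t • (-g)‖ := norm_add_le _ _
            _ = ‖xstar‖ + t * ‖g‖ := by
                rw [norm_smul, norm_neg, Real.norm_eq_abs, abs_of_pos ht]
        have hb2 : t * (‖g‖ + 1) ≤ c - ‖xstar‖ := by
          have := (le_div_iff₀ (by positivity : (0:ℝ) < ‖g‖ + 1)).mp htε
          linarith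
        have hb3 : ‖xstar + t • (-g)‖ ≤ c := by nlinarith [norm_nonneg g]
        nlinarith [norm_nonneg (xstar + t • (-g))]
      have hε : 0 < (c - ‖xstar‖) / (‖g‖ + 1) := div_pos (by linarith) (by positivity)
      have h2 := hdir (-g) _ hε h1
      rw [inner_neg_right] at h2
      have h3 : ⟪g, g⟫ ≤ 0 := by linarith
      rw [real_inner_self_eq_norm_sq] at h3
      have : ‖g‖ = 0 := by nlinarith [norm_nonneg g]
      exact norm_eq_zero.mp this
    refine ⟨0, le_rfl, ?_, by ring⟩
    have hmv : (WithLp.equiv 2 (Fin n → ℝ)).symm ((B + (0:ℝ) • (1 : Matrix (Fin n) (Fin n) ℝ)).mulVec xstar)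
        = T xstar := by
      ext i
      simp [hT, Matrix.add_mulVec, Matrix.smul_mulVec, Matrix.one_mulVec,
        WithLp.equiv_symm_apply, PiLp.toLp_apply]
    rw [hmv, ← hg0, hg]
end

section
/- (Boundary case and strict complementary slackness.) Let n ≥ 1, let B be a symmetric positive definite n×n real matrix, b₁ ∈ ℝⁿ, β₀ ∈ ℝ, let ŷ(x) = β₀ + b₁ᵀx + xᵀBx, and let c > 0 with 𝔛 = {x ∈ ℝⁿ : ‖x‖² ≤ c²}. If ‖(1/2) B⁻¹ b₁‖ > c and x* ∈ 𝔛 is the global minimizer of ŷ over 𝔛, then x* lies on the boundary, ‖x*‖² = c², and every Lagrange multiplier λ ≥ 0 satisfying b₁ + 2(B + λI)x* = 0 is strictly positive: λ > 0. -/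
open scoped RealInnerProductSpace
open Matrix

set_option maxHeartbeats 1000000 in
/-- boundary case, strict complementary slackness: if `‖(1/2)B⁻¹b₁‖ > c` and
`x*` is the global minimizer of `ŷ` over `𝔛 = {x : ‖x‖² ≤ c²}`, then `‖x*‖² = c²` and any
Lagrange multiplier `λ ≥ 0` with `b₁ + 2(B + λI)x* = 0` satisfies `λ > 0`. -/
theorem boundary_case_strict_complementary_slackness (n : ℕ) (hn : 1 ≤ n)
    (B : Matrix (Fin n) (Fin n) ℝ) (hB : B.IsSymm)
    (hBpd : ∀ x : EuclideanSpace ℝ (Fin n), x ≠ 0 →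
      0 < ⟪x, (WithLp.toLp 2 (B.mulVec x) : EuclideanSpace ℝ (Fin n))⟫)
    (b₁ : EuclideanSpace ℝ (Fin n)) (β₀ : ℝ) (c : ℝ) (hc : 0 < c)
    (hbd : c < ‖((1 : ℝ)/2) • ((WithLp.equiv 2 (Fin n → ℝ)).symm (B⁻¹.mulVec b₁))‖)
    (xstar : EuclideanSpace ℝ (Fin n))
    (hxstar : ‖xstar‖ ^ 2 ≤ c ^ 2)
    (hmin : ∀ x ∈ {x : EuclideanSpace ℝ (Fin n) | ‖x‖ ^ 2 ≤ c ^ 2},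
      β₀ + ⟪b₁, xstar⟫ + ⟪xstar, (WithLp.toLp 2 (B.mulVec xstar) : EuclideanSpace ℝ (Fin n))⟫ ≤
      β₀ + ⟪b₁, x⟫ + ⟪x, (WithLp.toLp 2 (B.mulVec x) : EuclideanSpace ℝ (Fin n))⟫) :
    ‖xstar‖ ^ 2 = c ^ 2 ∧
    ∀ lam : ℝ, 0 ≤ lam →
      b₁ + (2 : ℝ) • (WithLp.equiv 2 (Fin n → ℝ)).symm
        ((B + lam • (1 : Matrix (Fin n) (Fin n) ℝ)).mulVec xstar) = 0 →
      0 < lam := by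
  classical
  have hip : ∀ u v : EuclideanSpace ℝ (Fin n), ⟪u, v⟫ =
      dotProduct ((WithLp.equiv 2 (Fin n → ℝ)) u) ((WithLp.equiv 2 (Fin n → ℝ)) v) :=
    fun u v => by simp [PiLp.inner_apply, dotProduct, mul_comm]
  -- symmetry of the bilinear form
  have hQsymm : ∀ u v : EuclideanSpace ℝ (Fin n),
      ⟪u, (WithLp.toLp 2 (B.mulVec v) : EuclideanSpace ℝ (Fin n))⟫ =
      ⟪v, (WithLp.toLp 2 (B.mulVec u) : EuclideanSpace ℝ (Fin n))⟫ := by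
    intro u v
    rw [hip, hip]
    show dotProduct u.ofLp (B *ᵥ v.ofLp) = dotProduct v.ofLp (B *ᵥ u.ofLp)
    rw [Matrix.dotProduct_mulVec, ← hB.eq, Matrix.vecMul_transpose, dotProduct_comm,
      hB.eq]
  -- B is positive definite in the matrix sense, hence invertible
  have hPD : B.PosDef := by
    rw [Matrix.posDef_iff_dotProduct_mulVec]
    constructor
    · show Bᴴ = B
      simpa using hB.eq
    · intro x hx
      have hx' : ((WithLp.equiv 2 (Fin n → ℝ)).symm x : EuclideanSpace ℝ (Fin n)) ≠ 0 :=
        fun h => hx (congrArg WithLp.ofLp h)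
      have := hBpd ((WithLp.equiv 2 (Fin n → ℝ)).symm x) hx'
      rw [hip] at this
      simpa using this
  have hBdet : IsUnit B.det := hPD.isUnit.map Matrix.detMonoidHom
  set Bxs : EuclideanSpace ℝ (Fin n) := (WithLp.toLp 2 (B.mulVec xstar) : EuclideanSpace ℝ (Fin n))
    with hBxs
  -- the stationarity equation forces xstar off the ball, a contradiction
  have hstat : b₁ + (2 : ℝ) • Bxs = 0 → False := by
    intro h0
    have h1 : Bxs = (-(1/2) : ℝ) • b₁ := by
      have h2 : (2 : ℝ) • Bxs = -b₁ := by rwa [add_comm, add_eq_zero_iff_eq_neg] at h0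
      have h3 := congrArg (fun z : EuclideanSpace ℝ (Fin n) => ((1 : ℝ)/2) • z) h2
      simp only [smul_smul] at h3
      norm_num at h3
      rw [h3]; module
    have h3 : B⁻¹ *ᵥ (B *ᵥ xstar) =
        B⁻¹ *ᵥ ((WithLp.equiv 2 (Fin n → ℝ)) ((-(1/2) : ℝ) • b₁)) := by
      rw [hBxs] at h1
      exact congrArg (fun z : EuclideanSpace ℝ (Fin n) =>
        B⁻¹ *ᵥ ((WithLp.equiv 2 (Fin n → ℝ)) z)) h1
    have h4 : xstar = ((-(1/2) : ℝ) •
        ((WithLp.equiv 2 (Fin n → ℝ)).symm (B⁻¹.mulVec b₁)) : EuclideanSpace ℝ (Fin n)) := by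
      rw [Matrix.mulVec_mulVec, Matrix.nonsing_inv_mul B hBdet, Matrix.one_mulVec] at h3
      have h5 : B⁻¹ *ᵥ ((WithLp.equiv 2 (Fin n → ℝ)) ((-(1/2) : ℝ) • b₁)) =
          (-(1/2) : ℝ) • (B⁻¹ *ᵥ ((WithLp.equiv 2 (Fin n → ℝ)) b₁)) := by
        rw [show (WithLp.equiv 2 (Fin n → ℝ)) ((-(1/2) : ℝ) • b₁) =
            (-(1/2) : ℝ) • (WithLp.equiv 2 (Fin n → ℝ)) b₁ from rfl, Matrix.mulVec_smul]
      rw [h5] at h3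
      exact congrArg (WithLp.toLp 2) h3
    have hnorm : ‖xstar‖ =
        ‖((1 : ℝ)/2) • ((WithLp.equiv 2 (Fin n → ℝ)).symm (B⁻¹.mulVec b₁))‖ := by
      rw [h4]
      rw [show ((-(1/2) : ℝ) • ((WithLp.equiv 2 (Fin n → ℝ)).symm (B⁻¹.mulVec b₁))
          : EuclideanSpace ℝ (Fin n)) =
          -(((1 : ℝ)/2) • ((WithLp.equiv 2 (Fin n → ℝ)).symm (B⁻¹.mulVec b₁))) by module]
      exact norm_neg _
    have hcx : c < ‖xstar‖ := hnorm ▸ hbd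
    nlinarith [norm_nonneg xstar]
  -- Part 1: boundary
  have hbdary : ‖xstar‖ ^ 2 = c ^ 2 := by
    by_contra hne
    have hlt : ‖xstar‖ ^ 2 < c ^ 2 := lt_of_le_of_ne hxstar hne
    have hxlt : ‖xstar‖ < c := by nlinarith [norm_nonneg xstar]
    set w : EuclideanSpace ℝ (Fin n) := b₁ + (2 : ℝ) • Bxs with hw_def
    by_cases hw : w = 0
    · exact hstat hw
    · have hwpos : 0 < ‖w‖ := norm_pos_iff.mpr hw
      have hQw : 0 < ⟪w, (WithLp.toLp 2 (B.mulVec w) : EuclideanSpace ℝ (Fin n))⟫ := hBpd w hw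
      set t : ℝ := min ((c - ‖xstar‖) / (2 * ‖w‖))
        (‖w‖ ^ 2 / (2 * ⟪w, (WithLp.toLp 2 (B.mulVec w) : EuclideanSpace ℝ (Fin n))⟫)) with ht_def
      have ht0 : 0 < t := by
        apply lt_min
        · exact div_pos (by linarith) (by positivity)
        · exact div_pos (by positivity) (by linarith)
      set x : EuclideanSpace ℝ (Fin n) := xstar - t • w with hx_def
      -- feasibility
      have hxfeas : ‖x‖ ^ 2 ≤ c ^ 2 := by
        have h1 : ‖x‖ ≤ ‖xstar‖ + t * ‖w‖ := by
          calc ‖x‖ ≤ ‖xstar‖ + ‖t • w‖ := norm_sub_le _ _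
          _ = ‖xstar‖ + t * ‖w‖ := by rw [norm_smul, Real.norm_eq_abs, abs_of_pos ht0]
        have hle : t ≤ (c - ‖xstar‖) / (2 * ‖w‖) := min_le_left _ _
        have h2 : t * ‖w‖ ≤ (c - ‖xstar‖) / 2 := by
          have h2a : t * ‖w‖ ≤ (c - ‖xstar‖) / (2 * ‖w‖) * ‖w‖ :=
            mul_le_mul_of_nonneg_right hle (norm_nonneg w)
          have h2b : (c - ‖xstar‖) / (2 * ‖w‖) * ‖w‖ = (c - ‖xstar‖) / 2 := by
            field_simp
          linarith
        have h3 : ‖x‖ ≤ c := by linarith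
        nlinarith [norm_nonneg x]
      -- the value decreases
      set Bw : EuclideanSpace ℝ (Fin n) := (WithLp.toLp 2 (B.mulVec w) : EuclideanSpace ℝ (Fin n)) with hBw
      have hBsub : (WithLp.toLp 2 (B.mulVec x) : EuclideanSpace ℝ (Fin n)) = Bxs - t • Bw := by
        rw [hBxs, hBw, hx_def]
        rw [show (xstar - t • w : EuclideanSpace ℝ (Fin n)) = xstar + (-t) • w by module]
        rw [show (WithLp.toLp 2 (B.mulVec (WithLp.ofLp (xstar + (-t) • w))) : EuclideanSpace ℝ (Fin n)) =
          (WithLp.toLp 2 (B.mulVec xstar) : EuclideanSpace ℝ (Fin n)) +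
          (-t) • (WithLp.toLp 2 (B.mulVec w) : EuclideanSpace ℝ (Fin n)) from by
            ext i; simp [Matrix.mulVec_add, Matrix.mulVec_neg, Matrix.mulVec_smul]]
        module
      have e1 : ⟪b₁, x⟫ = ⟪b₁, xstar⟫ - t * ⟪b₁, w⟫ := by
        rw [hx_def, inner_sub_right, real_inner_smul_right]
      have e2 : ⟪x, (WithLp.toLp 2 (B.mulVec x) : EuclideanSpace ℝ (Fin n))⟫ =
          ⟪xstar, Bxs⟫ - 2 * t * ⟪w, Bxs⟫
          + t ^ 2 * ⟪w, Bw⟫ := by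
        have hq : ⟪xstar, Bw⟫ = ⟪w, Bxs⟫ := by
          rw [hBw, hQsymm xstar w, hBxs]
        rw [hBsub, hx_def, inner_sub_left, inner_sub_right, inner_sub_right,
          real_inner_smul_left, real_inner_smul_left, real_inner_smul_right,
          real_inner_smul_right, hq]
        ring
      have e3 : ⟪w, w⟫ = ⟪b₁, w⟫ + 2 * ⟪w, Bxs⟫ := by
        nth_rewrite 1 [hw_def]
        rw [inner_add_left, real_inner_smul_left, real_inner_comm Bxs w]
      have hval : β₀ + ⟪b₁, x⟫ + ⟪x, (WithLp.toLp 2 (B.mulVec x) : EuclideanSpace ℝ (Fin n))⟫ =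
          (β₀ + ⟪b₁, xstar⟫ + ⟪xstar, Bxs⟫)
          - t * ⟪w, w⟫ + t ^ 2 * ⟪w, Bw⟫ := by
        rw [e1, e2, e3]
        ring
      have hww : ⟪w, w⟫ = ‖w‖ ^ 2 := real_inner_self_eq_norm_sq w
      have hdec : β₀ + ⟪b₁, x⟫ + ⟪x, (WithLp.toLp 2 (B.mulVec x) : EuclideanSpace ℝ (Fin n))⟫ <
          β₀ + ⟪b₁, xstar⟫ + ⟪xstar, Bxs⟫ := by
        rw [hval, hww]
        have ht2 : t ≤ ‖w‖ ^ 2 / (2 * ⟪w, Bw⟫) := min_le_right _ _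
        have hQw' : 0 < ⟪w, Bw⟫ := hQw
        have ht3 : t * (2 * ⟪w, Bw⟫) ≤ ‖w‖ ^ 2 := by
          rw [← le_div_iff₀ (by linarith)]
          exact ht2
        have h5 : t * (t * (2 * ⟪w, Bw⟫)) ≤
            t * ‖w‖ ^ 2 := mul_le_mul_of_nonneg_left ht3 ht0.le
        have h6 : 0 < t * ‖w‖ ^ 2 := by positivity
        nlinarith [h5, h6]
      exact absurd (hmin x hxfeas) (not_le.mpr hdec)
  refine ⟨hbdary, ?_⟩
  intro lam hlam heq
  rcases hlam.lt_or_eq with h | h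
  · exact h
  · exfalso
    apply hstat
    rw [← h] at heq
    simp only [zero_smul, add_zero] at heq
    exact heq
end

section
/- (Explicit solution of the linearized Kuhn–Tucker system.) Let G be a symmetric positive definite n×n real matrix, let x ∈ ℝⁿ be nonzero with column matrix X (n×1), and let M be an n×p real matrix. Set s = XᵀG⁻¹X (an invertible 1×1 matrix since ⟨x, G⁻¹x⟩ > 0). Then there exists a unique pair (D, d), with D an n×p matrix and d a 1×p matrix, satisfying G·D + 2X·d = −M and Xᵀ·D = 0; moreover D = G⁻¹(X·s⁻¹·Xᵀ·G⁻¹ − I)·M and d = −(1/2)·s⁻¹·Xᵀ·G⁻¹·M. -/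
open scoped RealInnerProductSpace
open Matrix

/-- explicit solution of the linearized Kuhn–Tucker system: with `G` symmetric
positive definite, `x ≠ 0` with column matrix `X`, `s = XᵀG⁻¹X`, the system
`G·D + 2X·d = −M`, `Xᵀ·D = 0` has a unique solution `(D, d)`, given by
`D = G⁻¹(X·s⁻¹·Xᵀ·G⁻¹ − I)·M` and `d = −(1/2)·s⁻¹·Xᵀ·G⁻¹·M`. -/
theorem linearized_kuhnTucker_solution (n p : ℕ) (hn : 1 ≤ n)
    (G : Matrix (Fin n) (Fin n) ℝ) (hG : G.IsSymm)
    (hGpd : ∀ v : EuclideanSpace ℝ (Fin n), v ≠ 0 →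
      0 < ⟪v, (WithLp.toLp 2 (G.mulVec v) : EuclideanSpace ℝ (Fin n))⟫)
    (x : EuclideanSpace ℝ (Fin n)) (hx : x ≠ 0)
    (X : Matrix (Fin n) (Fin 1) ℝ) (hX : X = Matrix.of fun i (_ : Fin 1) => x i)
    (M : Matrix (Fin n) (Fin p) ℝ) :
    (∃! Dd : Matrix (Fin n) (Fin p) ℝ × Matrix (Fin 1) (Fin p) ℝ,
        G * Dd.1 + (2 : ℝ) • (X * Dd.2) = -M ∧ Xᵀ * Dd.1 = 0) ∧
    ∀ (D : Matrix (Fin n) (Fin p) ℝ) (d : Matrix (Fin 1) (Fin p) ℝ),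
      G * D + (2 : ℝ) • (X * d) = -M → Xᵀ * D = 0 →
      D = G⁻¹ * (X * (Xᵀ * G⁻¹ * X)⁻¹ * Xᵀ * G⁻¹ - 1) * M ∧
      d = -((1 : ℝ)/2) • ((Xᵀ * G⁻¹ * X)⁻¹ * Xᵀ * G⁻¹ * M) := by
  -- G is positive definite
  have hGpd' : G.PosDef := by
    refine Matrix.PosDef.of_dotProduct_mulVec_pos ?_ fun v hv => ?_
    · show Gᴴ = G; simpa using hG.eq
    have := hGpd (WithLp.toLp 2 v) (by simpa using hv)
    simpa [PiLp.inner_apply, dotProduct, mul_comm] using this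
  have hGinvpd : (G⁻¹).PosDef := hGpd'.inv
  have hGu : IsUnit G.det := hGpd'.det_pos.ne'.isUnit
  have hG1 : G⁻¹ * G = 1 := Matrix.nonsing_inv_mul G hGu
  have hG2 : G * G⁻¹ = 1 := Matrix.mul_nonsing_inv G hGu
  -- s entry is positive
  have hspos : 0 < (Xᵀ * G⁻¹ * X) 0 0 := by
    have hx' : (fun i => x i : Fin n → ℝ) ≠ 0 := fun hc => hx (by ext i; exact congrFun hc i)
    have h := hGinvpd.dotProduct_mulVec_pos hx'
    have h2 : (0:ℝ) < ∑ j, ∑ i, x j * (x i * G⁻¹ j i) := by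
      simpa [hX, Matrix.mul_apply, Matrix.mulVec, dotProduct, Finset.mul_sum,
        star, mul_comm, mul_assoc, mul_left_comm] using h
    have h3 : (0:ℝ) < ∑ j, ∑ i, x j * (x i * G⁻¹ i j) := by
      refine h2.trans_eq ?_
      rw [Finset.sum_comm]
      exact Finset.sum_congr rfl fun j _ => Finset.sum_congr rfl fun i _ => by ring
    simpa [hX, Matrix.mul_apply, Matrix.mulVec, dotProduct, Finset.mul_sum,
      star, mul_comm, mul_assoc, mul_left_comm] using h3
  have hsu : IsUnit (Xᵀ * G⁻¹ * X).det := by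
    rw [Matrix.det_fin_one]
    exact hspos.ne'.isUnit
  have hs1 : (Xᵀ * G⁻¹ * X)⁻¹ * (Xᵀ * G⁻¹ * X) = 1 := Matrix.nonsing_inv_mul _ hsu
  have hs2 : (Xᵀ * G⁻¹ * X) * (Xᵀ * G⁻¹ * X)⁻¹ = 1 := Matrix.mul_nonsing_inv _ hsu
  -- make the inverses opaque
  set T := (Xᵀ * G⁻¹ * X)⁻¹ with hT
  set Gi := G⁻¹ with hGi
  clear_value T Gi
  clear hT hGi hGinvpd hGu hsu hspos hGpd hGpd' hG hX hx hn
  -- convenient forms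
  have hG1A : ∀ q (A : Matrix (Fin n) (Fin q) ℝ), Gi * (G * A) = A := fun q A => by
    rw [← Matrix.mul_assoc, hG1, Matrix.one_mul]
  have hG2A : ∀ q (A : Matrix (Fin n) (Fin q) ℝ), G * (Gi * A) = A := fun q A => by
    rw [← Matrix.mul_assoc, hG2, Matrix.one_mul]
  have hs1A : ∀ q (A : Matrix (Fin 1) (Fin q) ℝ), T * (Xᵀ * (Gi * (X * A))) = A := fun q A => by
    rw [show T * (Xᵀ * (Gi * (X * A))) = (T * (Xᵀ * Gi * X)) * A by
      simp only [Matrix.mul_assoc], hs1, Matrix.one_mul]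
  have hs2A : ∀ q (A : Matrix (Fin 1) (Fin q) ℝ), Xᵀ * (Gi * (X * (T * A))) = A := fun q A => by
    rw [show Xᵀ * (Gi * (X * (T * A))) = ((Xᵀ * Gi * X) * T) * A by
      simp only [Matrix.mul_assoc], hs2, Matrix.one_mul]
  set D₀ : Matrix (Fin n) (Fin p) ℝ := Gi * (X * T * Xᵀ * Gi - 1) * M with hD₀
  set d₀ : Matrix (Fin 1) (Fin p) ℝ := -((1 : ℝ)/2) • (T * Xᵀ * Gi * M) with hd₀
  -- the candidate solves the system
  have heq1 : G * D₀ + (2 : ℝ) • (X * d₀) = -M := by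
    rw [hD₀, hd₀]
    simp only [Matrix.mul_sub, Matrix.sub_mul, Matrix.one_mul, Matrix.mul_one,
      Matrix.mul_assoc, Matrix.mul_smul, smul_smul, hG2A]
    norm_num
    abel
  have heq2 : Xᵀ * D₀ = 0 := by
    rw [hD₀]
    simp only [Matrix.mul_sub, Matrix.sub_mul, Matrix.one_mul, Matrix.mul_one,
      Matrix.mul_assoc, hs2A, sub_self]
  -- uniqueness computation
  have key : ∀ (D : Matrix (Fin n) (Fin p) ℝ) (d : Matrix (Fin 1) (Fin p) ℝ),
      G * D + (2 : ℝ) • (X * d) = -M → Xᵀ * D = 0 → D = D₀ ∧ d = d₀ := by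
    intro D d h1 h2
    have hD : D = -(Gi * M) - (2 : ℝ) • (Gi * (X * d)) := by
      have h := congrArg (fun A => Gi * A) h1
      simp only [Matrix.mul_add, Matrix.mul_smul, hG1A, Matrix.mul_neg] at h
      exact eq_sub_of_add_eq h
    have h2' : -(Xᵀ * (Gi * M)) - (2 : ℝ) • (Xᵀ * (Gi * (X * d))) = 0 := by
      rw [← h2, hD]
      simp only [Matrix.mul_sub, Matrix.mul_neg, Matrix.mul_smul, Matrix.mul_assoc]
    have h3 : (2 : ℝ) • d = -(T * (Xᵀ * (Gi * M))) := by
      have h := congrArg (fun A => T * A) h2'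
      simp only [Matrix.mul_sub, Matrix.mul_neg, Matrix.mul_smul, hs1A,
        Matrix.mul_zero] at h
      have := sub_eq_zero.mp h
      rw [← this]
    have hd : d = d₀ := by
      have : d = ((1:ℝ)/2) • ((2:ℝ) • d) := by
        rw [smul_smul]; norm_num
      rw [this, h3, hd₀, smul_neg, ← neg_smul]
      congr 1
      simp only [Matrix.mul_assoc]
    refine ⟨?_, hd⟩
    rw [hD, hd, hD₀, hd₀]
    rw [Matrix.mul_smul, Matrix.mul_smul, smul_smul]
    have h4 : (2 : ℝ) * -(1/2) = -1 := by norm_num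
    rw [h4, neg_one_smul]
    simp only [Matrix.sub_mul, Matrix.mul_sub, Matrix.mul_one, Matrix.one_mul,
      Matrix.mul_assoc]
    abel
  refine ⟨⟨(D₀, d₀), ⟨heq1, heq2⟩, ?_⟩, fun D d h1 h2 => key D d h1 h2⟩
  rintro ⟨D, d⟩ ⟨h1, h2⟩
  obtain ⟨hDe, hde⟩ := key D d h1 h2
  simp [hDe, hde]
end

section
/- (Differentiable dependence of the Kuhn–Tucker point on the regression coefficients; boundary case.) Let n ≥ 1 and c > 0. Suppose B⁰ is a symmetric n×n real matrix, b₁⁰ ∈ ℝⁿ, λ₀ > 0 and x₀ ∈ ℝⁿ satisfy: ‖x₀‖² = c², b₁⁰ + 2(B⁰ + λ₀I)x₀ = 0, and B⁰ + λ₀I is positive definite. Then there exist an open neighborhood U of (b₁⁰, B⁰) in ℝⁿ × (n×n real matrices) and continuously differentiable functions x : U → ℝⁿ and λ : U → ℝ with x(b₁⁰, B⁰) = x₀ and λ(b₁⁰, B⁰) = λ₀, such that for every (b₁, B) ∈ U: b₁ + 2(B + λ(b₁, B)I)·x(b₁, B) = 0, ‖x(b₁, B)‖² = c², and λ(b₁,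 B) > 0 (so the status of the constraint is unchanged in the neighborhood). -/
open scoped RealInnerProductSpace
open Matrix

attribute [local instance] Matrix.normedAddCommGroup Matrix.normedSpace

/-- Matrix-vector multiplication as a continuous bilinear map on Euclidean space. -/
noncomputable def mvCLM (n : ℕ) :
    Matrix (Fin n) (Fin n) ℝ →L[ℝ] EuclideanSpace ℝ (Fin n) →L[ℝ] EuclideanSpace ℝ (Fin n) :=
  LinearMap.toContinuousLinearMap
    (((LinearMap.toContinuousLinearMap :
        (EuclideanSpace ℝ (Fin n) →ₗ[ℝ] EuclideanSpace ℝ (Fin n)) ≃ₗ[ℝ]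
          (EuclideanSpace ℝ (Fin n) →L[ℝ] EuclideanSpace ℝ (Fin n))).toLinearMap).comp
      (Matrix.toEuclideanLin (𝕜 := ℝ) (m := Fin n) (n := Fin n)).toLinearMap)

theorem mvCLM_apply {n : ℕ} (A : Matrix (Fin n) (Fin n) ℝ) (v : EuclideanSpace ℝ (Fin n)) :
    mvCLM n A v = (WithLp.equiv 2 (Fin n → ℝ)).symm (A.mulVec v) := rfl

set_option maxHeartbeats 1000000 in
set_option synthInstance.maxHeartbeats 400000 in
/-- differentiable dependence of the boundary Kuhn–Tucker point on the
regression coefficients: if `(x₀, lam₀)` is a boundary Kuhn–Tucker point for the coefficients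
`(b₁⁰, B⁰)` with `lam₀ > 0` and `B⁰ + lam₀I` positive definite, then on a neighborhood `U` of
`(b₁⁰, B⁰)` there are `C¹` functions `x(·), λ(·)` through `(x₀, lam₀)` satisfying the
Kuhn–Tucker equations with active constraint and positive multiplier throughout `U`. -/
theorem kuhnTucker_point_contDiff_dependence (n : ℕ) (hn : 1 ≤ n) (c : ℝ) (hc : 0 < c)
    (B₀ : Matrix (Fin n) (Fin n) ℝ) (hB₀ : B₀.IsSymm)
    (b₀ : EuclideanSpace ℝ (Fin n)) (lam₀ : ℝ) (hlam₀ : 0 < lam₀)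
    (x₀ : EuclideanSpace ℝ (Fin n)) (hx₀ : ‖x₀‖ ^ 2 = c ^ 2)
    (hkt : b₀ + (2 : ℝ) • (WithLp.equiv 2 (Fin n → ℝ)).symm
      ((B₀ + lam₀ • (1 : Matrix (Fin n) (Fin n) ℝ)).mulVec x₀) = 0)
    (hpd : ∀ v : EuclideanSpace ℝ (Fin n), v ≠ 0 →
      0 < ⟪v, (WithLp.toLp 2 ((B₀ + lam₀ • (1 : Matrix (Fin n) (Fin n) ℝ)).mulVec v) :
        EuclideanSpace ℝ (Fin n))⟫) :
    ∃ U : Set (EuclideanSpace ℝ (Fin n) × Matrix (Fin n) (Fin n) ℝ),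
      IsOpen U ∧ (b₀, B₀) ∈ U ∧
      ∃ x : EuclideanSpace ℝ (Fin n) × Matrix (Fin n) (Fin n) ℝ → EuclideanSpace ℝ (Fin n),
      ∃ lam : EuclideanSpace ℝ (Fin n) × Matrix (Fin n) (Fin n) ℝ → ℝ,
        ContDiffOn ℝ 1 x U ∧ ContDiffOn ℝ 1 lam U ∧
        x (b₀, B₀) = x₀ ∧ lam (b₀, B₀) = lam₀ ∧
        ∀ q ∈ U,
          q.1 + (2 : ℝ) • (WithLp.equiv 2 (Fin n → ℝ)).symm
            ((q.2 + lam q • (1 : Matrix (Fin n) (Fin n) ℝ)).mulVec (x q)) = 0 ∧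
          ‖x q‖ ^ 2 = c ^ 2 ∧ 0 < lam q := by
  classical
  set a : (EuclideanSpace ℝ (Fin n) × Matrix (Fin n) (Fin n) ℝ) ×
      (EuclideanSpace ℝ (Fin n) × ℝ) := ((b₀, B₀), (x₀, lam₀)) with ha
  -- the projections as continuous linear maps
  set Pm : ((EuclideanSpace ℝ (Fin n) × Matrix (Fin n) (Fin n) ℝ) ×
        (EuclideanSpace ℝ (Fin n) × ℝ)) →L[ℝ] Matrix (Fin n) (Fin n) ℝ :=
    ((ContinuousLinearMap.snd ℝ (EuclideanSpace ℝ (Fin n)) (Matrix (Fin n) (Fin n) ℝ)).comp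
        (ContinuousLinearMap.fst ℝ _ _)) +
      (((ContinuousLinearMap.snd ℝ (EuclideanSpace ℝ (Fin n)) ℝ).comp
        (ContinuousLinearMap.snd ℝ _ _)).smulRight (1 : Matrix (Fin n) (Fin n) ℝ)) with hPm
  set Px : ((EuclideanSpace ℝ (Fin n) × Matrix (Fin n) (Fin n) ℝ) ×
        (EuclideanSpace ℝ (Fin n) × ℝ)) →L[ℝ] EuclideanSpace ℝ (Fin n) :=
    (ContinuousLinearMap.fst ℝ (EuclideanSpace ℝ (Fin n)) ℝ).comp
      (ContinuousLinearMap.snd ℝ _ _) with hPx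
  set Pb : ((EuclideanSpace ℝ (Fin n) × Matrix (Fin n) (Fin n) ℝ) ×
        (EuclideanSpace ℝ (Fin n) × ℝ)) →L[ℝ] EuclideanSpace ℝ (Fin n) :=
    (ContinuousLinearMap.fst ℝ (EuclideanSpace ℝ (Fin n)) (Matrix (Fin n) (Fin n) ℝ)).comp
      (ContinuousLinearMap.fst ℝ _ _) with hPb
  set G : (EuclideanSpace ℝ (Fin n) × Matrix (Fin n) (Fin n) ℝ) ×
        (EuclideanSpace ℝ (Fin n) × ℝ) →
      (EuclideanSpace ℝ (Fin n) × Matrix (Fin n) (Fin n) ℝ) ×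
        (EuclideanSpace ℝ (Fin n) × ℝ) :=
    fun z => (z.1, (Pb z + (2 : ℝ) • mvCLM n (Pm z) (Px z),
      ⟪Px z, Px z⟫ - c ^ 2)) with hGdef
  have hx₀ne : x₀ ≠ 0 := by
    have hnx : ‖x₀‖ = c := by nlinarith [norm_nonneg x₀]
    intro h
    rw [h, norm_zero] at hnx
    exact hc.ne hnx
  -- smoothness of G
  have hGc : ContDiff ℝ 1 G := by
    rw [hGdef]
    refine contDiff_fst.prodMk (ContDiff.prodMk ?_ ?_)
    · exact Pb.contDiff.add
        ((ContDiff.clm_apply ((mvCLM n).contDiff.comp Pm.contDiff) Px.contDiff).const_smul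
          (2 : ℝ))
    · exact (Px.contDiff.inner ℝ Px.contDiff).sub contDiff_const
  -- the derivative of G at a
  set L : ((EuclideanSpace ℝ (Fin n) × Matrix (Fin n) (Fin n) ℝ) ×
        (EuclideanSpace ℝ (Fin n) × ℝ)) →L[ℝ]
      ((EuclideanSpace ℝ (Fin n) × Matrix (Fin n) (Fin n) ℝ) ×
        (EuclideanSpace ℝ (Fin n) × ℝ)) :=
    (ContinuousLinearMap.fst ℝ _ _).prod
      ((Pb + (2 : ℝ) • (((mvCLM n (Pm a)).comp Px) + (ContinuousLinearMap.apply ℝ (EuclideanSpace ℝ (Fin n)) (Px a)).comp ((mvCLM n).comp Pm))).prod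
        ((fderivInnerCLM ℝ (Px a, Px a)).comp (Px.prod Px))) with hL
  have hd1 : HasFDerivAt (fun z : (EuclideanSpace ℝ (Fin n) × Matrix (Fin n) (Fin n) ℝ) ×
        (EuclideanSpace ℝ (Fin n) × ℝ) => z.1)
      (ContinuousLinearMap.fst ℝ (EuclideanSpace ℝ (Fin n) × Matrix (Fin n) (Fin n) ℝ)
        (EuclideanSpace ℝ (Fin n) × ℝ)) a :=
    (ContinuousLinearMap.fst ℝ (EuclideanSpace ℝ (Fin n) × Matrix (Fin n) (Fin n) ℝ)
      (EuclideanSpace ℝ (Fin n) × ℝ)).hasFDerivAt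
  have hd2 : HasFDerivAt (fun z : (EuclideanSpace ℝ (Fin n) × Matrix (Fin n) (Fin n) ℝ) ×
        (EuclideanSpace ℝ (Fin n) × ℝ) =>
        Pb z + (2 : ℝ) • mvCLM n (Pm z) (Px z))
      (Pb + (2 : ℝ) • (((mvCLM n (Pm a)).comp Px) + (ContinuousLinearMap.apply ℝ (EuclideanSpace ℝ (Fin n)) (Px a)).comp ((mvCLM n).comp Pm))) a := by
    refine Pb.hasFDerivAt.add (HasFDerivAt.const_smul ?_ (2 : ℝ))
    exact HasFDerivAt.clm_apply ((mvCLM n).hasFDerivAt.comp a Pm.hasFDerivAt) Px.hasFDerivAt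
  have hd3 : HasFDerivAt (fun z : (EuclideanSpace ℝ (Fin n) × Matrix (Fin n) (Fin n) ℝ) ×
        (EuclideanSpace ℝ (Fin n) × ℝ) => ⟪Px z, Px z⟫ - c ^ 2)
      ((fderivInnerCLM ℝ (Px a, Px a)).comp (Px.prod Px)) a :=
    HasFDerivAt.sub_const (c ^ 2)
      (HasFDerivAt.inner ℝ (Px.hasFDerivAt (x := a)) (Px.hasFDerivAt (x := a)))
  have hGL : HasFDerivAt G L a := by
    rw [hGdef, hL]
    exact hd1.prodMk (hd2.prodMk hd3)
  -- L is injective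
  have hinj : Function.Injective L := by
    have h0 : ∀ z, L z = 0 → z = 0 := by
      rintro ⟨⟨q1, q2⟩, ⟨w1, w2⟩⟩ h
      rw [hL] at h
      simp only [hPm, hPx, hPb, ha, ContinuousLinearMap.prod_apply,
        ContinuousLinearMap.add_apply, ContinuousLinearMap.coe_comp', Function.comp_apply,
        ContinuousLinearMap.coe_fst', ContinuousLinearMap.coe_snd',
        ContinuousLinearMap.smul_apply, ContinuousLinearMap.flip_apply, ContinuousLinearMap.apply_apply,
        ContinuousLinearMap.smulRight_apply, fderivInnerCLM_apply, Prod.mk_eq_zero,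
        Prod.fst_zero, Prod.snd_zero] at h
      obtain ⟨⟨hq1, hq2⟩, h2, h3⟩ := h
      subst hq1; subst hq2
      have hiw : ⟪x₀, w1⟫ = 0 := by
        have hcomm := real_inner_comm w1 x₀
        linarith
      have e2 : mvCLM n ((0 : Matrix (Fin n) (Fin n) ℝ) + w2 • 1) x₀ = w2 • x₀ := by
        rw [mvCLM_apply]
        exact congrArg (WithLp.equiv 2 (Fin n → ℝ)).symm
          (by rw [zero_add, Matrix.smul_mulVec, Matrix.one_mulVec]; exact rfl)
      rw [zero_add, e2] at h2
      have key : mvCLM n (B₀ + lam₀ • (1 : Matrix (Fin n) (Fin n) ℝ)) w1 + w2 • x₀ = 0 := by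
        rcases smul_eq_zero.mp h2 with h | h
        · norm_num at h
        · exact h
      have hw1 : w1 = 0 := by
        by_contra hw1ne
        have hgt : (0 : ℝ) <
            ⟪w1, mvCLM n (B₀ + lam₀ • (1 : Matrix (Fin n) (Fin n) ℝ)) w1⟫ := hpd w1 hw1ne
        have hz := congrArg (fun v => ⟪w1, v⟫) key
        simp only [inner_add_right, inner_zero_right, real_inner_smul_right] at hz
        have hwx : ⟪w1, x₀⟫ = 0 := by rw [real_inner_comm]; exact hiw
        rw [hwx, mul_zero, add_zero] at hz
        linarith
      subst hw1
      have hx' : w2 • x₀ = 0 := by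
        have e3 : mvCLM n (B₀ + lam₀ • (1 : Matrix (Fin n) (Fin n) ℝ))
            (0 : EuclideanSpace ℝ (Fin n)) = 0 := map_zero _
        rw [e3, zero_add] at key
        exact key
      have hw2 : w2 = 0 := by
        rcases smul_eq_zero.mp hx' with h | h
        · exact h
        · exact absurd h hx₀ne
      simp [hw2]
    intro u v huv
    have := h0 (u - v) (by rw [map_sub, huv, sub_self])
    exact sub_eq_zero.mp this
  -- upgrade L to a continuous linear equivalence
  have hbij : Function.Bijective (L :
      ((EuclideanSpace ℝ (Fin n) × Matrix (Fin n) (Fin n) ℝ) ×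
        (EuclideanSpace ℝ (Fin n) × ℝ)) →ₗ[ℝ] _) :=
    ⟨hinj, LinearMap.injective_iff_surjective.mp hinj⟩
  set e := (LinearEquiv.ofBijective _ hbij).toContinuousLinearEquiv with he
  have hGL' : HasFDerivAt G (e : ((EuclideanSpace ℝ (Fin n) × Matrix (Fin n) (Fin n) ℝ) ×
      (EuclideanSpace ℝ (Fin n) × ℝ)) →L[ℝ] _) a := by
    have hco : (e : ((EuclideanSpace ℝ (Fin n) × Matrix (Fin n) (Fin n) ℝ) ×
        (EuclideanSpace ℝ (Fin n) × ℝ)) →L[ℝ] _) = L := by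
      exact ContinuousLinearMap.ext fun z => rfl
    rw [hco]; exact hGL
  -- the local inverse
  have hGa : ContDiffAt ℝ 1 G a := hGc.contDiffAt
  set g := hGa.localInverse hGL' one_ne_zero with hg
  have hgC : ContDiffAt ℝ 1 g (G a) := hGa.to_localInverse hGL' one_ne_zero
  have hgval : g (G a) = a := hGa.localInverse_apply_image hGL' one_ne_zero
  have hGa0 : G a = ((b₀, B₀), ((0 : EuclideanSpace ℝ (Fin n)), (0 : ℝ))) := by
    have hPba : Pb a = b₀ := rfl
    have hPma : Pm a = B₀ + lam₀ • 1 := rfl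
    have hPxa : Px a = x₀ := rfl
    have hkt' : b₀ + (2 : ℝ) • mvCLM n (B₀ + lam₀ • 1) x₀ = 0 := hkt
    have h3 : ⟪x₀, x₀⟫ - c ^ 2 = 0 := by rw [real_inner_self_eq_norm_sq, hx₀, sub_self]
    show (a.1, (Pb a + (2 : ℝ) • mvCLM n (Pm a) (Px a), ⟪Px a, Px a⟫ - c ^ 2))
      = ((b₀, B₀), ((0 : EuclideanSpace ℝ (Fin n)), (0 : ℝ)))
    rw [hPba, hPma, hPxa, hkt', h3, ha]
  have hev : ∀ᶠ y in nhds (G a), G (g y) = y :=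
    (hGa.hasStrictFDerivAt' hGL' one_ne_zero).eventually_right_inverse
  have hcont : ContinuousAt (fun y => (g y).2.2) (G a) :=
    ((continuous_snd.comp continuous_snd).continuousAt).comp hgC.continuousAt
  have hevpos : ∀ᶠ y in nhds (G a), 0 < (g y).2.2 := by
    have hcont' : Filter.Tendsto (fun y => (g y).2.2) (nhds (G a)) (nhds ((g (G a)).2.2)) :=
      hcont
    have hval2 : (g (G a)).2.2 = lam₀ := by rw [hgval, ha]
    rw [hval2] at hcont'
    exact hcont'.eventually (eventually_gt_nhds hlam₀)
  obtain ⟨u, hu, hgu⟩ := hgC.contDiffOn le_rfl (by simp)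
  have hall : ∀ᶠ y in nhds (G a), (G (g y) = y ∧ 0 < (g y).2.2) ∧ y ∈ u :=
    (hev.and hevpos).and (Filter.eventually_mem_set.mpr hu)
  obtain ⟨V, hVp, hVopen, hVmem⟩ := eventually_nhds_iff.mp hall
  refine ⟨{p | (p, ((0 : EuclideanSpace ℝ (Fin n)), (0 : ℝ))) ∈ V}, ?_, ?_,
    fun p => (g (p, ((0 : EuclideanSpace ℝ (Fin n)), (0 : ℝ)))).2.1,
    fun p => (g (p, ((0 : EuclideanSpace ℝ (Fin n)), (0 : ℝ)))).2.2, ?_, ?_, ?_, ?_, ?_⟩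
  · exact hVopen.preimage (continuous_id.prodMk continuous_const)
  · show ((b₀, B₀), ((0 : EuclideanSpace ℝ (Fin n)), (0 : ℝ))) ∈ V
    exact hGa0 ▸ hVmem
  · have hι : ContDiff ℝ 1 (fun p : EuclideanSpace ℝ (Fin n) × Matrix (Fin n) (Fin n) ℝ =>
        (p, ((0 : EuclideanSpace ℝ (Fin n)), (0 : ℝ)))) := contDiff_id.prodMk contDiff_const
    refine (contDiff_fst.comp contDiff_snd).comp_contDiffOn (hgu.comp hι.contDiffOn ?_)
    intro p hp
    exact (hVp _ hp).2
  · have hι : ContDiff ℝ 1 (fun p : EuclideanSpace ℝ (Fin n) × Matrix (Fin n) (Fin n) ℝ =>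
        (p, ((0 : EuclideanSpace ℝ (Fin n)), (0 : ℝ)))) := contDiff_id.prodMk contDiff_const
    refine (contDiff_snd.comp contDiff_snd).comp_contDiffOn (hgu.comp hι.contDiffOn ?_)
    intro p hp
    exact (hVp _ hp).2
  · show (g ((b₀, B₀), ((0 : EuclideanSpace ℝ (Fin n)), (0 : ℝ)))).2.1 = x₀
    rw [← hGa0, hgval, ha]
  · show (g ((b₀, B₀), ((0 : EuclideanSpace ℝ (Fin n)), (0 : ℝ)))).2.2 = lam₀
    rw [← hGa0, hgval, ha]
  · rintro q hq
    obtain ⟨⟨hGy, hpos⟩, -⟩ := hVp _ hq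
    refine ⟨?_, ?_, hpos⟩
    · have h2 : Pb (g (q, ((0 : EuclideanSpace ℝ (Fin n)), (0 : ℝ)))) + (2 : ℝ) •
          mvCLM n (Pm (g (q, ((0 : EuclideanSpace ℝ (Fin n)), (0 : ℝ)))))
            (Px (g (q, ((0 : EuclideanSpace ℝ (Fin n)), (0 : ℝ))))) = 0 :=
        congrArg (fun w => w.2.1) hGy
      have h1 : (g (q, ((0 : EuclideanSpace ℝ (Fin n)), (0 : ℝ)))).1 = q :=
        congrArg Prod.fst hGy
      simp only [hPm, hPx, hPb, ContinuousLinearMap.add_apply,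
        ContinuousLinearMap.coe_comp', Function.comp_apply, ContinuousLinearMap.coe_fst',
        ContinuousLinearMap.coe_snd', ContinuousLinearMap.smulRight_apply] at h2
      rw [h1] at h2
      exact h2
    · have h3 : ⟪Px (g (q, ((0 : EuclideanSpace ℝ (Fin n)), (0 : ℝ)))),
          Px (g (q, ((0 : EuclideanSpace ℝ (Fin n)), (0 : ℝ))))⟫ - c ^ 2 = 0 :=
        congrArg (fun w => w.2.2) hGy
      simp only [hPx, ContinuousLinearMap.coe_comp', Function.comp_apply,
        ContinuousLinearMap.coe_fst', ContinuousLinearMap.coe_snd'] at h3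
      have h4 := real_inner_self_eq_norm_sq
        ((g (q, ((0 : EuclideanSpace ℝ (Fin n)), (0 : ℝ)))).2.1)
      show ‖(g (q, ((0 : EuclideanSpace ℝ (Fin n)), (0 : ℝ)))).2.1‖ ^ 2 = c ^ 2
      linarith
end

section
/- (Continuity of the optimal point in the regression coefficients.) Let n ≥ 1 and c > 0. For each pair (b₁, B) with B a symmetric positive definite n×n real matrix and b₁ ∈ ℝⁿ, let x*(b₁, B) denote the unique global minimizer of ŷ(x) = b₁ᵀx + xᵀBx over the closed ball 𝔛 = {x ∈ ℝⁿ : ‖x‖² ≤ c²}. Then the map (b₁, B) ↦ x*(b₁, B) is continuous on the set {(b₁, B) : B symmetric positive definite}. -/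
open scoped RealInnerProductSpace
open Matrix

-- continuity of the objective function in (coefficients, point)
lemma contF_aux (n : ℕ) :
    Continuous (fun p : (EuclideanSpace ℝ (Fin n) × Matrix (Fin n) (Fin n) ℝ) ×
        EuclideanSpace ℝ (Fin n) =>
      ⟪p.1.1, p.2⟫ + ⟪p.2, (WithLp.toLp 2 (p.1.2.mulVec p.2) : EuclideanSpace ℝ (Fin n))⟫) := by
  have h1 : Continuous fun p : (EuclideanSpace ℝ (Fin n) × Matrix (Fin n) (Fin n) ℝ) ×
      EuclideanSpace ℝ (Fin n) => (WithLp.toLp 2 (p.1.2.mulVec p.2) : EuclideanSpace ℝ (Fin n)) := by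
    have hA : Continuous fun p : (EuclideanSpace ℝ (Fin n) × Matrix (Fin n) (Fin n) ℝ) ×
        EuclideanSpace ℝ (Fin n) => p.1.2 := continuous_snd.comp continuous_fst
    have hB : Continuous fun p : (EuclideanSpace ℝ (Fin n) × Matrix (Fin n) (Fin n) ℝ) ×
        EuclideanSpace ℝ (Fin n) => (p.2 : Fin n → ℝ) :=
      (PiLp.continuous_ofLp 2 fun _ : Fin n => ℝ).comp continuous_snd
    exact (PiLp.continuous_toLp 2 fun _ : Fin n => ℝ).comp (hA.matrix_mulVec hB)
  exact ((continuous_fst.comp continuous_fst).inner continuous_snd).add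
    (continuous_snd.inner h1)

lemma uniq_min (n : ℕ) (c : ℝ) (hc : 0 < c)
    (q : EuclideanSpace ℝ (Fin n) × Matrix (Fin n) (Fin n) ℝ)
    (hpd : ∀ v : EuclideanSpace ℝ (Fin n), v ≠ 0 →
      0 < ⟪v, (WithLp.toLp 2 (q.2.mulVec v) : EuclideanSpace ℝ (Fin n))⟫)
    (a b : EuclideanSpace ℝ (Fin n))
    (ha : ‖a‖ ^ 2 ≤ c ^ 2) (hb : ‖b‖ ^ 2 ≤ c ^ 2)
    (hamin : ∀ x : EuclideanSpace ℝ (Fin n), ‖x‖ ^ 2 ≤ c ^ 2 →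
      ⟪q.1, a⟫ + ⟪a, (WithLp.toLp 2 (q.2.mulVec a) : EuclideanSpace ℝ (Fin n))⟫ ≤
      ⟪q.1, x⟫ + ⟪x, (WithLp.toLp 2 (q.2.mulVec x) : EuclideanSpace ℝ (Fin n))⟫)
    (hbmin : ∀ x : EuclideanSpace ℝ (Fin n), ‖x‖ ^ 2 ≤ c ^ 2 →
      ⟪q.1, b⟫ + ⟪b, (WithLp.toLp 2 (q.2.mulVec b) : EuclideanSpace ℝ (Fin n))⟫ ≤
      ⟪q.1, x⟫ + ⟪x, (WithLp.toLp 2 (q.2.mulVec x) : EuclideanSpace ℝ (Fin n))⟫) :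
    a = b := by
  by_contra hab
  set m : EuclideanSpace ℝ (Fin n) := (2 : ℝ)⁻¹ • (a + b) with hm_def
  set d : EuclideanSpace ℝ (Fin n) := (2 : ℝ)⁻¹ • (a - b) with hd_def
  have hd : d ≠ 0 := smul_ne_zero (by norm_num) (sub_ne_zero.mpr hab)
  have hpos := hpd d hd
  -- norms
  have hna : ‖a‖ ≤ c := by nlinarith [norm_nonneg a]
  have hnb : ‖b‖ ≤ c := by nlinarith [norm_nonneg b]
  have hnm : ‖m‖ ^ 2 ≤ c ^ 2 := by
    have h1 : ‖m‖ ≤ (2 : ℝ)⁻¹ * (‖a‖ + ‖b‖) := by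
      rw [hm_def, norm_smul]
      simp only [norm_inv, Real.norm_ofNat]
      gcongr
      exact norm_add_le a b
    have h2 : ‖m‖ ≤ c := by linarith
    nlinarith [norm_nonneg m]
  -- linearity of mulVec as maps on EuclideanSpace
  have hadd : (WithLp.toLp 2 (q.2.mulVec ((a : Fin n → ℝ) + b)) : EuclideanSpace ℝ (Fin n)) =
      (WithLp.toLp 2 (q.2.mulVec a) : EuclideanSpace ℝ (Fin n)) + (WithLp.toLp 2 (q.2.mulVec b) : EuclideanSpace ℝ (Fin n)) :=
    congrArg (WithLp.toLp 2) (Matrix.mulVec_add q.2 a b)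
  have hsub : (WithLp.toLp 2 (q.2.mulVec ((a : Fin n → ℝ) - b)) : EuclideanSpace ℝ (Fin n)) =
      (WithLp.toLp 2 (q.2.mulVec a) : EuclideanSpace ℝ (Fin n)) - (WithLp.toLp 2 (q.2.mulVec b) : EuclideanSpace ℝ (Fin n)) :=
    congrArg (WithLp.toLp 2) (Matrix.mulVec_sub q.2 a b)
  have hsm : ∀ (v : EuclideanSpace ℝ (Fin n)),
      (WithLp.toLp 2 (q.2.mulVec ((2 : ℝ)⁻¹ • (v : Fin n → ℝ))) : EuclideanSpace ℝ (Fin n)) =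
      (2 : ℝ)⁻¹ • (WithLp.toLp 2 (q.2.mulVec v) : EuclideanSpace ℝ (Fin n)) := fun v =>
    congrArg (WithLp.toLp 2) (Matrix.mulVec_smul q.2 _ v)
  have hmm : (WithLp.toLp 2 (q.2.mulVec m) : EuclideanSpace ℝ (Fin n)) =
      (2 : ℝ)⁻¹ • ((WithLp.toLp 2 (q.2.mulVec a) : EuclideanSpace ℝ (Fin n)) + WithLp.toLp 2 (q.2.mulVec b)) := by
    rw [hm_def, WithLp.ofLp_smul, hsm (a + b), WithLp.ofLp_add, hadd]
  have hdd : (WithLp.toLp 2 (q.2.mulVec d) : EuclideanSpace ℝ (Fin n)) =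
      (2 : ℝ)⁻¹ • ((WithLp.toLp 2 (q.2.mulVec a) : EuclideanSpace ℝ (Fin n)) - WithLp.toLp 2 (q.2.mulVec b)) := by
    rw [hd_def, WithLp.ofLp_smul, hsm (a - b), WithLp.ofLp_sub, hsub]
  -- key identity
  have key : ⟪q.1, m⟫ + ⟪m, (WithLp.toLp 2 (q.2.mulVec m) : EuclideanSpace ℝ (Fin n))⟫
      + ⟪d, (WithLp.toLp 2 (q.2.mulVec d) : EuclideanSpace ℝ (Fin n))⟫
      = (2 : ℝ)⁻¹ * ((⟪q.1, a⟫ + ⟪a, (WithLp.toLp 2 (q.2.mulVec a) : EuclideanSpace ℝ (Fin n))⟫)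
        + (⟪q.1, b⟫ + ⟪b, (WithLp.toLp 2 (q.2.mulVec b) : EuclideanSpace ℝ (Fin n))⟫)) := by
    rw [hmm, hdd, hm_def, hd_def]
    simp only [inner_add_left, inner_add_right, inner_sub_left, inner_sub_right,
      real_inner_smul_left, real_inner_smul_right]
    ring
  have h1 := hamin m hnm
  have h2 := hamin b hb
  have h3 := hbmin a ha
  linarith

/-- continuity of the optimal point in the regression coefficients: if
`xstar (b₁, B)` selects, for every symmetric positive definite `B`, the (unique) global
minimizer of `ŷ(x) = b₁ᵀx + xᵀBx` over the closed ball `𝔛 = {x : ‖x‖² ≤ c²}`, then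
`xstar` is continuous on the set of pairs `(b₁, B)` with `B` symmetric positive definite. -/
theorem optimal_point_continuousOn (n : ℕ) (hn : 1 ≤ n) (c : ℝ) (hc : 0 < c)
    (xstar : EuclideanSpace ℝ (Fin n) × Matrix (Fin n) (Fin n) ℝ → EuclideanSpace ℝ (Fin n))
    (hxstar : ∀ q : EuclideanSpace ℝ (Fin n) × Matrix (Fin n) (Fin n) ℝ,
      q.2.IsSymm →
      (∀ v : EuclideanSpace ℝ (Fin n), v ≠ 0 →
        0 < ⟪v, (WithLp.toLp 2 (q.2.mulVec v) : EuclideanSpace ℝ (Fin n))⟫) →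
      ‖xstar q‖ ^ 2 ≤ c ^ 2 ∧
      ∀ x : EuclideanSpace ℝ (Fin n), ‖x‖ ^ 2 ≤ c ^ 2 →
        ⟪q.1, xstar q⟫ + ⟪xstar q, (WithLp.toLp 2 (q.2.mulVec (xstar q)) : EuclideanSpace ℝ (Fin n))⟫ ≤
        ⟪q.1, x⟫ + ⟪x, (WithLp.toLp 2 (q.2.mulVec x) : EuclideanSpace ℝ (Fin n))⟫) :
    ContinuousOn xstar
      {q : EuclideanSpace ℝ (Fin n) × Matrix (Fin n) (Fin n) ℝ |
        q.2.IsSymm ∧ ∀ v : EuclideanSpace ℝ (Fin n), v ≠ 0 →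
          0 < ⟪v, (WithLp.toLp 2 (q.2.mulVec v) : EuclideanSpace ℝ (Fin n))⟫} := by
  set S := {q : EuclideanSpace ℝ (Fin n) × Matrix (Fin n) (Fin n) ℝ |
      q.2.IsSymm ∧ ∀ v : EuclideanSpace ℝ (Fin n), v ≠ 0 →
        0 < ⟪v, (WithLp.toLp 2 (q.2.mulVec v) : EuclideanSpace ℝ (Fin n))⟫} with hS_def
  intro q₀ hq₀
  rw [ContinuousWithinAt]
  haveI : FirstCountableTopology (Matrix (Fin n) (Fin n) ℝ) :=
    inferInstanceAs (FirstCountableTopology (Fin n → Fin n → ℝ))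
  apply Filter.tendsto_of_subseq_tendsto
  intro ns hns
  have hmem : ∀ᶠ k in Filter.atTop, ns k ∈ S := hns self_mem_nhdsWithin
  have hqtend : Filter.Tendsto ns Filter.atTop (nhds q₀) := hns.mono_right nhdsWithin_le_nhds
  set x : ℕ → EuclideanSpace ℝ (Fin n) := fun k => xstar (ns k) with hx_def
  have hball : ∀ᶠ k in Filter.atTop, x k ∈ Metric.closedBall (0 : EuclideanSpace ℝ (Fin n)) c := by
    refine hmem.mono fun k hk => ?_
    have h := (hxstar _ hk.1 hk.2).1
    rw [Metric.mem_closedBall, dist_zero_right]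
    nlinarith [norm_nonneg (x k)]
  obtain ⟨y, hy, φ, hφ, hxy⟩ := tendsto_subseq_of_frequently_bounded
    Metric.isBounded_closedBall hball.frequently
  rw [IsClosed.closure_eq Metric.isClosed_closedBall] at hy
  obtain ⟨hsym₀, hpd₀⟩ := hq₀
  obtain ⟨hb₀, hmin₀⟩ := hxstar q₀ hsym₀ hpd₀
  have hcy : ‖y‖ ≤ c := by rwa [Metric.mem_closedBall, dist_zero_right] at hy
  have hmemφ : ∀ᶠ k in Filter.atTop, ns (φ k) ∈ S := hφ.tendsto_atTop.eventually hmem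
  have hqφ : Filter.Tendsto (fun k => ns (φ k)) Filter.atTop (nhds q₀) :=
    hqtend.comp hφ.tendsto_atTop
  have hT : Filter.Tendsto (fun k => (ns (φ k), x (φ k))) Filter.atTop (nhds (q₀, y)) :=
    hqφ.prodMk_nhds hxy
  have hymin : ∀ xx : EuclideanSpace ℝ (Fin n), ‖xx‖ ^ 2 ≤ c ^ 2 →
      ⟪q₀.1, y⟫ + ⟪y, (WithLp.toLp 2 (q₀.2.mulVec y) : EuclideanSpace ℝ (Fin n))⟫ ≤
      ⟪q₀.1, xx⟫ + ⟪xx, (WithLp.toLp 2 (q₀.2.mulVec xx) : EuclideanSpace ℝ (Fin n))⟫ := by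
    intro xx hxx
    have h1 := ((contF_aux n).tendsto (q₀, y)).comp hT
    have hT2 : Filter.Tendsto (fun k => (ns (φ k), xx)) Filter.atTop (nhds (q₀, xx)) :=
      hqφ.prodMk_nhds tendsto_const_nhds
    have h2 := ((contF_aux n).tendsto (q₀, xx)).comp hT2
    exact le_of_tendsto_of_tendsto h1 h2
      (hmemφ.mono fun k hk => (hxstar _ hk.1 hk.2).2 xx hxx)
  have hyx : y = xstar q₀ := by
    refine uniq_min n c hc q₀ hpd₀ y (xstar q₀) ?_ hb₀ hymin hmin₀
    nlinarith [norm_nonneg y]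
  exact ⟨φ, hyx ▸ hxy⟩
end
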